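/- First converse step in the proof of Theorem 3 (inequality (refnoisy1)). Let (X_{1i},W_i), i=1,…,n, be i.i.d.; let K1 be independent of (X1^n,W^n); and let Ỹ1^n be any random vector jointly distributed with (K1,X1^n,W^n). Define U_{1i} = (K1, X_{1,i+1}^n, Ỹ1^n, W_{∼i}). Then ∑_{i=1}^n H(Ỹ_{1i}) ≥ H(Ỹ1^n) ≥ I(Ỹ1^n; X1^n | K1, W^n) ≥ ∑_{i=1}^n I(U_{1i}; X_{1i} | W_i). In particular, with T uniform on [1:n] independent of everything else and (U1, X1, W, Ỹ1) := (U_{1T}, X_{1T}, W_T, Ỹ_{1T}), this gives H(Ỹ1|T) ≥ I(U1; X1 | W, T). -/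

import Mathlib

open scoped BigOperators

namespace SecCoord

/-- `p` is a probability mass function on the finite type `α`. -/
def IsPMF {α : Type*} [Fintype α] (p : α → ℝ) : Prop :=
  (∀ a, 0 ≤ p a) ∧ ∑ a, p a = 1

/-- Total variation distance between two pmfs: half the `ℓ¹`-distance. -/
noncomputable def TV {α : Type*} [Fintype α] (p q : α → ℝ) : ℝ :=
  (1 / 2) * ∑ a, |p a - q a|

/-- Distribution (pushforward pmf) of a random variable `X : Ω → α` under `μ`. -/
noncomputable def dist {Ω α : Type*} [Fintype Ω] (μ : Ω → ℝ) (X : Ω → α) : α → ℝ :=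
  fun a => ∑ ω, Set.indicator {ω' | X ω' = a} μ ω

/-- Shannon entropy (in bits) of the random variable `X` under `μ`. -/
noncomputable def H {Ω α : Type*} [Fintype Ω] [Fintype α] (μ : Ω → ℝ) (X : Ω → α) : ℝ :=
  -∑ a, dist μ X a * Real.logb 2 (dist μ X a)

/-- Conditional Shannon entropy `H(X | Z)` (in bits). -/
noncomputable def condEnt {Ω α β : Type*} [Fintype Ω] [Fintype α] [Fintype β]
    (μ : Ω → ℝ) (X : Ω → α) (Z : Ω → β) : ℝ :=
  H μ (fun ω => (X ω, Z ω)) - H μ Z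

/-- Mutual information `I(X; Y)` (in bits). -/
noncomputable def MI {Ω α β : Type*} [Fintype Ω] [Fintype α] [Fintype β]
    (μ : Ω → ℝ) (X : Ω → α) (Y : Ω → β) : ℝ :=
  H μ X + H μ Y - H μ (fun ω => (X ω, Y ω))

/-- Conditional mutual information `I(X; Y | Z)` (in bits). -/
noncomputable def CMI {Ω α β γ : Type*} [Fintype Ω] [Fintype α] [Fintype β] [Fintype γ]
    (μ : Ω → ℝ) (X : Ω → α) (Y : Ω → β) (Z : Ω → γ) : ℝ :=
  (H μ (fun ω => (X ω, Z ω))) + (H μ (fun ω => (Y ω, Z ω)))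
    - (H μ (fun ω => (X ω, Y ω, Z ω))) - H μ Z

section Core

variable {Ω α β γ δ : Type*} [Fintype Ω] [Fintype α] [Fintype β] [Fintype γ] [Fintype δ]

lemma dist_apply [DecidableEq α] (μ : Ω → ℝ) (X : Ω → α) (a : α) :
    dist μ X a = ∑ ω, if X ω = a then μ ω else 0 := by
  classical
  unfold dist
  refine Finset.sum_congr rfl fun ω _ => ?_
  simp [Set.indicator_apply]

lemma sum_fiber (μ : Ω → ℝ) (X : Ω → α) (F : α → ℝ) :
    ∑ a, dist μ X a * F a = ∑ ω, μ ω * F (X ω) := by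
  classical
  simp only [dist_apply, Finset.sum_mul, ite_mul, zero_mul]
  rw [Finset.sum_comm]
  refine Finset.sum_congr rfl fun ω _ => ?_
  simp

lemma dist_sum (μ : Ω → ℝ) (hμ : IsPMF μ) (X : Ω → α) :
    ∑ a, dist μ X a = 1 := by
  classical
  have := sum_fiber μ X (fun _ => (1:ℝ))
  simpa [hμ.2] using this

lemma dist_nonneg' (μ : Ω → ℝ) (hμ : ∀ ω, 0 ≤ μ ω) (X : Ω → α) (a : α) :
    0 ≤ dist μ X a := by
  classical
  rw [dist_apply]
  exact Finset.sum_nonneg fun ω _ => by split <;> simp [hμ ω]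

lemma dist_pos_self (μ : Ω → ℝ) (hμ : ∀ ω, 0 ≤ μ ω) (X : Ω → α) {ω : Ω}
    (hω : 0 < μ ω) : 0 < dist μ X (X ω) := by
  classical
  rw [dist_apply]
  have h1 : (if X ω = X ω then μ ω else 0) ≤ ∑ ω', if X ω' = X ω then μ ω' else 0 :=
    Finset.single_le_sum (f := fun ω' => if X ω' = X ω then μ ω' else 0)
      (fun ω' _ => by split <;> simp [hμ ω']) (Finset.mem_univ ω)
  rw [if_pos rfl] at h1
  linarith

lemma H_eq (μ : Ω → ℝ) (X : Ω → α) :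
    H μ X = -∑ ω, μ ω * Real.logb 2 (dist μ X (X ω)) := by
  unfold H
  rw [sum_fiber μ X (fun a => Real.logb 2 (dist μ X a))]

lemma H_congr {X : Ω → α} {Y : Ω → β} (μ : Ω → ℝ)
    (h : ∀ ω ω', X ω = X ω' ↔ Y ω = Y ω') : H μ X = H μ Y := by
  classical
  rw [H_eq, H_eq]
  congr 1
  refine Finset.sum_congr rfl fun ω _ => ?_
  have : dist μ X (X ω) = dist μ Y (Y ω) := by
    rw [dist_apply, dist_apply]
    refine Finset.sum_congr rfl fun ω' _ => ?_
    rw [if_congr (h ω' ω) rfl rfl]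
  rw [this]

lemma gibbs (μ : Ω → ℝ) (hμ : IsPMF μ) (X : Ω → α) (q : α → ℝ)
    (hq0 : ∀ a, 0 ≤ q a) (hq1 : ∑ a, q a ≤ 1)
    (hdom : ∀ ω, 0 < μ ω → 0 < q (X ω)) :
    H μ X ≤ -∑ ω, μ ω * Real.logb 2 (q (X ω)) := by
  classical
  rw [H_eq]
  rw [neg_le_neg_iff]
  have hlog2 : (0:ℝ) < Real.log 2 := Real.log_pos (by norm_num)
  set p := dist μ X with hp
  -- termwise bound
  have key : ∀ ω, μ ω * Real.logb 2 (q (X ω)) - μ ω * Real.logb 2 (p (X ω))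
      ≤ (μ ω * (q (X ω) / p (X ω)) - μ ω) / Real.log 2 := by
    intro ω
    rcases lt_or_eq_of_le (hμ.1 ω) with hpos | hzero
    · have hq : 0 < q (X ω) := hdom ω hpos
      have hpx : 0 < p (X ω) := dist_pos_self μ hμ.1 X hpos
      have hratio : 0 < q (X ω) / p (X ω) := div_pos hq hpx
      have hlb : Real.log (q (X ω) / p (X ω)) ≤ q (X ω) / p (X ω) - 1 :=
        Real.log_le_sub_one_of_pos hratio
      have hsplit : Real.logb 2 (q (X ω)) - Real.logb 2 (p (X ω))
          = Real.log (q (X ω) / p (X ω)) / Real.log 2 := by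
        rw [Real.logb, Real.logb, div_sub_div_same, Real.log_div (ne_of_gt hq) (ne_of_gt hpx)]
      rw [← mul_sub, hsplit]
      have hmul : μ ω * Real.log (q (X ω) / p (X ω)) ≤ μ ω * (q (X ω) / p (X ω) - 1) :=
        mul_le_mul_of_nonneg_left hlb (le_of_lt hpos)
      calc μ ω * (Real.log (q (X ω) / p (X ω)) / Real.log 2)
          = (μ ω * Real.log (q (X ω) / p (X ω))) / Real.log 2 := by ring
        _ ≤ (μ ω * (q (X ω) / p (X ω) - 1)) / Real.log 2 := by gcongr
        _ = (μ ω * (q (X ω) / p (X ω)) - μ ω) / Real.log 2 := by ring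
    · rw [← hzero]; simp
  have hsum := Finset.sum_le_sum (s := Finset.univ) (fun ω _ => key ω)
  rw [Finset.sum_sub_distrib] at hsum
  have hS : ∑ ω, μ ω * (q (X ω) / p (X ω)) ≤ 1 := by
    rw [← sum_fiber μ X (fun a => q a / p a)]
    calc ∑ a, p a * (q a / p a) ≤ ∑ a, q a := by
          refine Finset.sum_le_sum fun a _ => ?_
          rcases eq_or_lt_of_le (dist_nonneg' μ hμ.1 X a) with h0 | h0
          · rw [← hp] at h0; rw [← h0]; simp [hq0 a]
          · rw [← hp] at h0; rw [mul_div_cancel₀ _ (ne_of_gt h0)]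
      _ ≤ 1 := hq1
  have : ∑ ω, ((μ ω * (q (X ω) / p (X ω)) - μ ω) / Real.log 2)
      = ((∑ ω, μ ω * (q (X ω) / p (X ω))) - 1) / Real.log 2 := by
    rw [← Finset.sum_div, Finset.sum_sub_distrib, hμ.2]
  rw [this] at hsum
  have hle : ((∑ ω, μ ω * (q (X ω) / p (X ω))) - 1) / Real.log 2 ≤ 0 :=
    div_nonpos_of_nonpos_of_nonneg (by linarith) (le_of_lt hlog2)
  linarith

end Core

section Layer2

variable {Ω α β γ δ : Type*} [Fintype Ω] [Fintype α] [Fintype β] [Fintype γ] [Fintype δ]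

lemma marg_fst (μ : Ω → ℝ) (A : Ω → α) (C : Ω → γ) (a : α) :
    dist μ A a = ∑ c, dist μ (fun ω => (A ω, C ω)) (a, c) := by
  classical
  simp only [dist_apply]
  rw [Finset.sum_comm]
  refine Finset.sum_congr rfl fun ω _ => ?_
  by_cases h : A ω = a <;> simp [Prod.ext_iff, h]

lemma marg_snd (μ : Ω → ℝ) (A : Ω → α) (C : Ω → γ) (c : γ) :
    dist μ C c = ∑ a, dist μ (fun ω => (A ω, C ω)) (a, c) := by
  classical
  simp only [dist_apply]
  rw [Finset.sum_comm]
  refine Finset.sum_congr rfl fun ω _ => ?_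
  by_cases h : C ω = c <;> simp [Prod.ext_iff, h]

lemma marg_mid (μ : Ω → ℝ) (A : Ω → α) (B : Ω → β) (Z : Ω → γ) (a : α) (z : γ) :
    dist μ (fun ω => (A ω, Z ω)) (a, z)
      = ∑ b, dist μ (fun ω => (A ω, B ω, Z ω)) (a, b, z) := by
  classical
  simp only [dist_apply]
  rw [Finset.sum_comm]
  refine Finset.sum_congr rfl fun ω _ => ?_
  by_cases h : A ω = a ∧ Z ω = z
  · simp [Prod.ext_iff, h.1, h.2]
  · simp only [Prod.mk.injEq]
    rw [if_neg (by tauto), Finset.sum_eq_zero]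
    intro b _
    rw [if_neg (by tauto)]

lemma H_pair_le (μ : Ω → ℝ) (hμ : IsPMF μ) (A : Ω → α) (C : Ω → γ) :
    H μ (fun ω => (A ω, C ω)) ≤ H μ A + H μ C := by
  classical
  have h := gibbs μ hμ (fun ω => (A ω, C ω))
      (fun p => dist μ A p.1 * dist μ C p.2)
      (fun p => mul_nonneg (dist_nonneg' μ hμ.1 A p.1) (dist_nonneg' μ hμ.1 C p.2))
      (by
        rw [Fintype.sum_prod_type]
        simp only [← Finset.sum_mul, ← Finset.mul_sum]
        rw [dist_sum μ hμ A, dist_sum μ hμ C, one_mul])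
      (fun ω hω => mul_pos (dist_pos_self μ hμ.1 A hω) (dist_pos_self μ hμ.1 C hω))
  refine le_trans h ?_
  rw [H_eq μ A, H_eq μ C, ← neg_add, ← Finset.sum_add_distrib, neg_le_neg_iff]
  refine Finset.sum_le_sum fun ω _ => ?_
  rcases lt_or_eq_of_le (hμ.1 ω) with hpos | hzero
  · rw [Real.logb_mul (ne_of_gt (dist_pos_self μ hμ.1 A hpos))
      (ne_of_gt (dist_pos_self μ hμ.1 C hpos))]
    ring_nf
    exact le_refl _
  · rw [← hzero]; simp

lemma H_snd_le (μ : Ω → ℝ) (hμ : IsPMF μ) (A : Ω → α) (C : Ω → γ) :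
    H μ C ≤ H μ (fun ω => (A ω, C ω)) := by
  classical
  rw [H_eq, H_eq, neg_le_neg_iff]
  refine Finset.sum_le_sum fun ω _ => ?_
  rcases lt_or_eq_of_le (hμ.1 ω) with hpos | hzero
  · have h1 : dist μ (fun ω => (A ω, C ω)) (A ω, C ω) ≤ dist μ C (C ω) := by
      rw [dist_apply, dist_apply]
      refine Finset.sum_le_sum fun ω' _ => ?_
      by_cases h : (A ω', C ω') = (A ω, C ω)
      · rw [if_pos h, if_pos (congrArg Prod.snd h)]
      · rw [if_neg h]; split <;> simp [hμ.1 ω']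
    have h2 : 0 < dist μ (fun ω => (A ω, C ω)) (A ω, C ω) :=
      dist_pos_self μ hμ.1 (fun ω => (A ω, C ω)) hpos
    exact mul_le_mul_of_nonneg_left
      (Real.logb_le_logb_of_le (by norm_num) h2 h1) (le_of_lt hpos)
  · rw [← hzero]; simp

lemma CMI_nonneg (μ : Ω → ℝ) (hμ : IsPMF μ) (X : Ω → α) (Y : Ω → β) (Z : Ω → γ) :
    0 ≤ CMI μ X Y Z := by
  classical
  set pXZ := dist μ (fun ω => (X ω, Z ω)) with hpXZ
  set pYZ := dist μ (fun ω => (Y ω, Z ω)) with hpYZ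
  set pZ := dist μ Z with hpZ
  set q : α × β × γ → ℝ := fun p =>
    if pZ p.2.2 = 0 then 0 else pXZ (p.1, p.2.2) * pYZ (p.2.1, p.2.2) / pZ p.2.2 with hq
  have hXZ0 : ∀ p, 0 ≤ pXZ p := fun p => dist_nonneg' μ hμ.1 _ p
  have hYZ0 : ∀ p, 0 ≤ pYZ p := fun p => dist_nonneg' μ hμ.1 _ p
  have hZ0 : ∀ z, 0 ≤ pZ z := fun z => dist_nonneg' μ hμ.1 _ z
  have hq0 : ∀ p, 0 ≤ q p := by
    intro p
    rw [hq]
    dsimp only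
    split
    · exact le_refl 0
    · exact div_nonneg (mul_nonneg (hXZ0 _) (hYZ0 _)) (hZ0 _)
  have hmargX : ∀ z, ∑ x, pXZ (x, z) = pZ z := fun z => (marg_snd μ X Z z).symm
  have hmargY : ∀ z, ∑ y, pYZ (y, z) = pZ z := fun z => (marg_snd μ Y Z z).symm
  have hq1 : ∑ p, q p ≤ 1 := by
    rw [Fintype.sum_prod_type]
    have : ∀ x : α, ∑ p : β × γ, q (x, p) = ∑ z, ∑ y, q (x, y, z) := by
      intro x; rw [Fintype.sum_prod_type, Finset.sum_comm]
    simp only [this]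
    rw [Finset.sum_comm]
    have hz : ∀ z : γ, ∑ x : α, ∑ y : β, q (x, y, z) ≤ pZ z := by
      intro z
      by_cases h : pZ z = 0
      · simp only [hq, h, if_pos rfl]
        simp [hZ0 z, h]
      · have : ∑ x : α, ∑ y : β, q (x, y, z)
            = (∑ x : α, pXZ (x, z)) * (∑ y : β, pYZ (y, z)) / pZ z := by
          simp only [hq, if_neg h]
          rw [Finset.sum_mul_sum, Finset.sum_div]
          refine Finset.sum_congr rfl fun x _ => ?_
          rw [Finset.sum_div]
        rw [this, hmargX, hmargY]
        rw [mul_div_assoc, div_self h, mul_one]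
    calc ∑ z, ∑ x : α, ∑ y : β, q (x, y, z) ≤ ∑ z, pZ z :=
          Finset.sum_le_sum fun z _ => hz z
      _ = 1 := dist_sum μ hμ Z
  have hdom : ∀ ω, 0 < μ ω → 0 < q (X ω, Y ω, Z ω) := by
    intro ω hω
    have h1 : 0 < pXZ (X ω, Z ω) := dist_pos_self μ hμ.1 _ hω
    have h2 : 0 < pYZ (Y ω, Z ω) := dist_pos_self μ hμ.1 _ hω
    have h3 : 0 < pZ (Z ω) := dist_pos_self μ hμ.1 _ hω
    rw [hq]
    dsimp only
    rw [if_neg (ne_of_gt h3)]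
    exact div_pos (mul_pos h1 h2) h3
  have h := gibbs μ hμ (fun ω => (X ω, Y ω, Z ω)) q hq0 hq1 hdom
  have hrw : -∑ ω, μ ω * Real.logb 2 (q (X ω, Y ω, Z ω))
      = H μ (fun ω => (X ω, Z ω)) + H μ (fun ω => (Y ω, Z ω)) - H μ Z := by
    rw [H_eq μ (fun ω => (X ω, Z ω)), H_eq μ (fun ω => (Y ω, Z ω)), H_eq μ Z]
    rw [← hpXZ, ← hpYZ, ← hpZ]
    have : ∀ ω : Ω, μ ω * Real.logb 2 (q (X ω, Y ω, Z ω))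
        = μ ω * Real.logb 2 (pXZ (X ω, Z ω)) + μ ω * Real.logb 2 (pYZ (Y ω, Z ω))
          - μ ω * Real.logb 2 (pZ (Z ω)) := by
      intro ω
      rcases lt_or_eq_of_le (hμ.1 ω) with hpos | hzero
      · have h1 : 0 < pXZ (X ω, Z ω) := dist_pos_self μ hμ.1 _ hpos
        have h2 : 0 < pYZ (Y ω, Z ω) := dist_pos_self μ hμ.1 _ hpos
        have h3 : 0 < pZ (Z ω) := dist_pos_self μ hμ.1 _ hpos
        have : q (X ω, Y ω, Z ω) = pXZ (X ω, Z ω) * pYZ (Y ω, Z ω) / pZ (Z ω) := by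
          rw [hq]; dsimp only; rw [if_neg (ne_of_gt h3)]
        rw [this, Real.logb_div (by positivity) (ne_of_gt h3),
          Real.logb_mul (ne_of_gt h1) (ne_of_gt h2)]
        ring
      · rw [← hzero]; simp
    rw [Finset.sum_congr rfl fun ω _ => this ω]
    rw [Finset.sum_sub_distrib, Finset.sum_add_distrib]
    ring
  rw [hrw] at h
  unfold CMI
  linarith

end Layer2


section Layer3

variable {Ω α β γ δ : Type*} [Fintype Ω] [Fintype α] [Fintype β] [Fintype γ] [Fintype δ]

lemma H_add_of_factor (μ : Ω → ℝ) (hμ : IsPMF μ) (A : Ω → α) (C : Ω → γ)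
    (f : α → ℝ) (g : γ → ℝ)
    (hfac : ∀ a c, dist μ (fun ω => (A ω, C ω)) (a, c) = f a * g c) :
    H μ (fun ω => (A ω, C ω)) = H μ A + H μ C := by
  classical
  set F := ∑ a, f a with hF
  set G := ∑ c, g c with hG
  have hA : ∀ a, dist μ A a = f a * G := by
    intro a
    rw [marg_fst μ A C a]
    simp only [hfac, ← Finset.mul_sum]; rfl
  have hC : ∀ c, dist μ C c = F * g c := by
    intro c
    rw [marg_snd μ A C c]
    simp only [hfac, ← Finset.sum_mul]; rfl
  have hFG : F * G = 1 := by
    have h1 : ∑ a, dist μ A a = 1 := dist_sum μ hμ A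
    simp only [hA, ← Finset.sum_mul] at h1
    rw [mul_comm] at h1
    rw [hF, hG]
    rw [mul_comm]
    exact h1
  have hprod : ∀ a c, dist μ (fun ω => (A ω, C ω)) (a, c) = dist μ A a * dist μ C c := by
    intro a c
    rw [hA, hC, hfac]
    calc f a * g c = (f a * g c) * (F * G) := by rw [hFG, mul_one]
      _ = f a * G * (F * g c) := by ring
  rw [H_eq μ (fun ω => (A ω, C ω)), H_eq μ A, H_eq μ C, ← neg_add,
    ← Finset.sum_add_distrib]
  congr 1
  refine Finset.sum_congr rfl fun ω _ => ?_
  rcases lt_or_eq_of_le (hμ.1 ω) with hpos | hzero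
  · rw [hprod, Real.logb_mul (ne_of_gt (dist_pos_self μ hμ.1 A hpos))
      (ne_of_gt (dist_pos_self μ hμ.1 C hpos))]
    ring
  · rw [← hzero]; simp

lemma CMI_eq_zero_of_factor (μ : Ω → ℝ) (hμ : IsPMF μ)
    (A : Ω → α) (B : Ω → β) (Z : Ω → γ) (f : α → ℝ) (g : β × γ → ℝ)
    (hfac : ∀ a b z, dist μ (fun ω => (A ω, B ω, Z ω)) (a, b, z) = f a * g (b, z)) :
    CMI μ A B Z = 0 := by
  classical
  have h1 : H μ (fun ω => (A ω, B ω, Z ω)) = H μ A + H μ (fun ω => (B ω, Z ω)) :=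
    H_add_of_factor μ hμ A (fun ω => (B ω, Z ω)) f g (fun a p => by
      obtain ⟨b, z⟩ := p; exact hfac a b z)
  have h2 : H μ (fun ω => (A ω, Z ω)) = H μ A + H μ Z := by
    refine H_add_of_factor μ hμ A Z f (fun z => ∑ b, g (b, z)) (fun a z => ?_)
    rw [marg_mid μ A B Z a z]
    simp only [hfac, ← Finset.mul_sum]
  unfold CMI
  rw [h1, h2]
  ring

lemma CMI_congr (μ : Ω → ℝ) {α' β' γ' : Type*} [Fintype α'] [Fintype β'] [Fintype γ']
    {X : Ω → α} {X' : Ω → α'} {Y : Ω → β} {Y' : Ω → β'} {Z : Ω → γ} {Z' : Ω → γ'}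
    (hX : ∀ ω ω', X ω = X ω' ↔ X' ω = X' ω')
    (hY : ∀ ω ω', Y ω = Y ω' ↔ Y' ω = Y' ω')
    (hZ : ∀ ω ω', Z ω = Z ω' ↔ Z' ω = Z' ω') :
    CMI μ X Y Z = CMI μ X' Y' Z' := by
  classical
  unfold CMI
  rw [H_congr μ (X := fun ω => (X ω, Z ω)) (Y := fun ω => (X' ω, Z' ω))
      (fun ω ω' => by simp only [Prod.mk.injEq, hX ω ω', hZ ω ω']),
    H_congr μ (X := fun ω => (Y ω, Z ω)) (Y := fun ω => (Y' ω, Z' ω))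
      (fun ω ω' => by simp only [Prod.mk.injEq, hY ω ω', hZ ω ω']),
    H_congr μ (X := fun ω => (X ω, Y ω, Z ω)) (Y := fun ω => (X' ω, Y' ω, Z' ω))
      (fun ω ω' => by simp only [Prod.mk.injEq, hX ω ω', hY ω ω', hZ ω ω']),
    H_congr μ (X := Z) (Y := Z') hZ]

lemma CMI_chain (μ : Ω → ℝ) (C : Ω → α) (D : Ω → δ) (B : Ω → β) (Z : Ω → γ) :
    CMI μ (fun ω => (C ω, D ω)) B Z
      = CMI μ C B Z + CMI μ D B (fun ω => (C ω, Z ω)) := by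
  classical
  unfold CMI
  have e1 : H μ (fun ω => (D ω, (C ω, Z ω))) = H μ (fun ω => ((C ω, D ω), Z ω)) :=
    H_congr μ (fun ω ω' => by simp only [Prod.mk.injEq]; tauto)
  have e2 : H μ (fun ω => (B ω, (C ω, Z ω))) = H μ (fun ω => (C ω, B ω, Z ω)) :=
    H_congr μ (fun ω ω' => by simp only [Prod.mk.injEq]; tauto)
  have e3 : H μ (fun ω => (D ω, B ω, (C ω, Z ω))) = H μ (fun ω => ((C ω, D ω), B ω, Z ω)) :=
    H_congr μ (fun ω ω' => by simp only [Prod.mk.injEq]; tauto)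
  rw [e1, e2, e3]
  ring

lemma H_le_sum {m : ℕ} (μ : Ω → ℝ) (hμ : IsPMF μ) (Y : Ω → (Fin m → β)) :
    H μ Y ≤ ∑ i, H μ (fun ω => Y ω i) := by
  classical
  induction m with
  | zero =>
    haveI : Unique (Fin 0 → β) := ⟨⟨fun i => i.elim0⟩, by intro x; funext j; exact j.elim0⟩
    have h := gibbs μ hμ Y (fun _ => (1:ℝ)) (fun _ => zero_le_one)
      (by rw [Finset.sum_const]; simp) (fun ω _ => zero_lt_one)
    simpa using h
  | succ m ih =>
    have e : H μ Y = H μ (fun ω => (Y ω 0, fun j : Fin m => Y ω j.succ)) := by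
      refine H_congr μ (fun ω ω' => ?_)
      simp only [Prod.mk.injEq, funext_iff, Fin.forall_fin_succ]
    rw [e, Fin.sum_univ_succ]
    calc H μ (fun ω => (Y ω 0, fun j : Fin m => Y ω j.succ))
        ≤ H μ (fun ω => Y ω 0) + H μ (fun ω => fun j : Fin m => Y ω j.succ) :=
          H_pair_le μ hμ _ _
      _ ≤ H μ (fun ω => Y ω 0) + ∑ i : Fin m, H μ (fun ω => Y ω i.succ) := by
          have := ih (fun ω => fun j : Fin m => Y ω j.succ)
          linarith

end Layer3


section Layer4

/-- Split a function on `Fin n` into its value at `i` and the rest. -/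
def splitAt {n : ℕ} {β : Type*} (i : Fin n) : (Fin n → β) ≃ β × ({j : Fin n // j ≠ i} → β) where
  toFun x := (x i, fun j => x j.1)
  invFun p := fun j => if h : j ≠ i then p.2 ⟨j, h⟩ else p.1
  left_inv x := by
    funext j
    dsimp only
    split_ifs with h
    · rfl
    · push_neg at h; rw [h]
  right_inv p := by
    refine Prod.ext ?_ ?_
    · simp
    · funext j
      simp [j.2]

lemma splitAt_symm_same {n : ℕ} {β : Type*} (i : Fin n) (p : β × ({j : Fin n // j ≠ i} → β)) :
    (splitAt i).symm p i = p.1 := by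
  simp [splitAt]

lemma splitAt_symm_ne {n : ℕ} {β : Type*} (i : Fin n) (p : β × ({j : Fin n // j ≠ i} → β))
    {j : Fin n} (h : j ≠ i) : (splitAt i).symm p j = p.2 ⟨j, h⟩ := by
  simp [splitAt, h]

lemma prod_split {n : ℕ} (i : Fin n) (φ : Fin n → ℝ) :
    ∏ j, φ j = φ i * ∏ j : {j : Fin n // j ≠ i}, φ j.1 := by
  classical
  rw [← Finset.mul_prod_erase Finset.univ φ (Finset.mem_univ i)]
  congr 1
  rw [← Finset.prod_subtype (Finset.univ.erase i) (fun j => by simp [eq_comm]) φ]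

end Layer4


section ConverseStepThm3

variable {K1 X1 W Yt1 : Type} [Fintype K1] [Fintype X1] [Fintype W] [Fintype Yt1]



lemma factor_key {n : ℕ}
    (pK : K1 → ℝ) (qXW : X1 × W → ℝ)
    (μ : K1 × (Fin n → X1) × (Fin n → W) × (Fin n → Yt1) → ℝ)
    (hmarg : ∀ k x w,
      (∑ yt : Fin n → Yt1, μ (k, x, w, yt)) = pK k * ∏ i, qXW (x i, w i))
    (i : Fin n)
    (a : K1 × ({j : Fin n // i < j} → X1) × ({j : Fin n // j ≠ i} → W)) :
    ∃ S : ℝ, ∀ (b : X1) (c : W),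
      dist μ (fun ω => ((ω.1, fun j : {j : Fin n // i < j} => ω.2.1 j.1,
          fun j : {j : Fin n // j ≠ i} => ω.2.2.1 j.1), ω.2.1 i, ω.2.2.1 i)) (a, b, c)
        = S * qXW (b, c) := by
  classical
  refine ⟨pK a.1 * ∑ xr : {j : Fin n // j ≠ i} → X1,
    if (fun j : {j : Fin n // i < j} => xr ⟨j.1, (ne_of_lt j.2).symm⟩) = a.2.1
    then ∏ j : {j : Fin n // j ≠ i}, qXW (xr j, a.2.2 j) else 0, ?_⟩
  intro b c
  rw [dist_apply]
  simp only [Fintype.sum_prod_type]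
  -- collapse the y-sum using hmarg
  have hy : ∀ (P : Prop) {_ : Decidable P} {_ : Fintype (Fin n → Yt1)} (k x w),
      (∑ y : Fin n → Yt1, if P then μ (k, x, w, y) else 0)
        = if P then pK k * ∏ j, qXW (x j, w j) else 0 := by
    intro P _ _ k x w
    by_cases h : P
    · simp only [if_pos h]; convert hmarg k x w
    · simp only [if_neg h, Finset.sum_const_zero]
  simp only [Finset.sum_congr rfl fun _ _ => Finset.sum_congr rfl fun _ _ => Finset.sum_congr rfl fun _ _ => hy _ _ _ _]
  -- reindex the x- and w-sums
  have hsplit : ∀ {β : Type} [Fintype β] (G : (Fin n → β) → ℝ),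
      (∑ x, G x) = ∑ p : β × ({j : Fin n // j ≠ i} → β), G ((splitAt i).symm p) := by
    intro β _ G
    rw [Equiv.sum_comp ((splitAt i).symm) G]
  simp only [hsplit]
  simp only [Fintype.sum_prod_type]
  have hXgt : ∀ (bx : X1) (xr : {j : Fin n // j ≠ i} → X1),
      (fun j : {j : Fin n // i < j} => (splitAt i).symm (bx, xr) j.1)
        = fun j => xr ⟨j.1, (ne_of_lt j.2).symm⟩ :=
    fun bx xr => funext fun j => splitAt_symm_ne i _ ((ne_of_lt j.2).symm)
  have hWne : ∀ (bw : W) (wr : {j : Fin n // j ≠ i} → W),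
      (fun j : {j : Fin n // j ≠ i} => (splitAt i).symm (bw, wr) j.1) = wr :=
    fun bw wr => funext fun j => splitAt_symm_ne i _ j.2
  have hprod : ∀ (bx : X1) (xr) (bw : W) (wr),
      (∏ j : Fin n, qXW ((splitAt i).symm (bx, xr) j, (splitAt i).symm (bw, wr) j))
        = qXW (bx, bw) * ∏ j : {j : Fin n // j ≠ i}, qXW (xr j, wr j) := by
    intro bx xr bw wr
    rw [prod_split i]
    rw [splitAt_symm_same, splitAt_symm_same]
    congr 1
    refine Finset.prod_congr rfl fun j _ => ?_
    rw [splitAt_symm_ne i _ j.2, splitAt_symm_ne i _ j.2]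
  simp only [splitAt_symm_same, hXgt, hWne, hprod]
  simp only [Prod.mk.injEq, Prod.ext_iff]
  rw [Finset.sum_eq_single a.1 (fun k _ hk => by
      refine Finset.sum_eq_zero fun bx _ => Finset.sum_eq_zero fun xr _ => ?_
      refine Finset.sum_eq_zero fun bw _ => Finset.sum_eq_zero fun wr _ => ?_
      simp [hk])
    (fun h => absurd (Finset.mem_univ a.1) h)]
  rw [Finset.sum_eq_single b (fun bx _ hbx => by
      refine Finset.sum_eq_zero fun xr _ => ?_
      refine Finset.sum_eq_zero fun bw _ => Finset.sum_eq_zero fun wr _ => ?_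
      simp [hbx])
    (fun h => absurd (Finset.mem_univ b) h)]
  have hinner : ∀ xr : {j : Fin n // j ≠ i} → X1,
      (∑ bw : W, ∑ wr : {j : Fin n // j ≠ i} → W,
        if (a.1 = a.1 ∧ (fun j : {j : Fin n // i < j} => xr ⟨j.1, (ne_of_lt j.2).symm⟩) = a.2.1
            ∧ wr = a.2.2) ∧ b = b ∧ bw = c then
          pK a.1 * (qXW (b, bw) * ∏ j : {j : Fin n // j ≠ i}, qXW (xr j, wr j))
        else 0)
      = if (fun j : {j : Fin n // i < j} => xr ⟨j.1, (ne_of_lt j.2).symm⟩) = a.2.1 then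
          pK a.1 * (qXW (b, c) * ∏ j : {j : Fin n // j ≠ i}, qXW (xr j, a.2.2 j))
        else 0 := by
    intro xr
    rw [Finset.sum_eq_single c (fun bw _ hbw => Finset.sum_eq_zero fun wr _ => by simp [hbw])
      (fun h => absurd (Finset.mem_univ c) h)]
    rw [Finset.sum_eq_single a.2.2 (fun wr _ hwr => by simp [hwr])
      (fun h => absurd (Finset.mem_univ a.2.2) h)]
    simp
  refine (Finset.sum_congr rfl fun xr _ => hinner xr).trans ?_
  rw [Finset.mul_sum, Finset.sum_mul]
  refine Finset.sum_congr rfl fun xr _ => ?_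
  split_ifs with h
  · ring
  · simp



lemma factor_full {n : ℕ}
    (pK : K1 → ℝ) (qXW : X1 × W → ℝ) (hqXW : IsPMF qXW)
    (μ : K1 × (Fin n → X1) × (Fin n → W) × (Fin n → Yt1) → ℝ)
    (hmarg : ∀ k x w,
      (∑ yt : Fin n → Yt1, μ (k, x, w, yt)) = pK k * ∏ i, qXW (x i, w i))
    (i : Fin n) :
    ∀ a b c,
      dist μ (fun ω => ((ω.1, fun j : {j : Fin n // i < j} => ω.2.1 j.1,
          fun j : {j : Fin n // j ≠ i} => ω.2.2.1 j.1), ω.2.1 i, ω.2.2.1 i)) (a, b, c)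
        = dist μ (fun ω => (ω.1, fun j : {j : Fin n // i < j} => ω.2.1 j.1,
            fun j : {j : Fin n // j ≠ i} => ω.2.2.1 j.1)) a * qXW (b, c) := by
  intro a b c
  obtain ⟨S, hS⟩ := factor_key pK qXW μ hmarg i a
  have hCv : dist μ (fun ω => (ω.1, fun j : {j : Fin n // i < j} => ω.2.1 j.1,
      fun j : {j : Fin n // j ≠ i} => ω.2.2.1 j.1)) a = S := by
    rw [marg_fst μ _ (fun ω => (ω.2.1 i, ω.2.2.1 i)) a]
    calc ∑ p : X1 × W, dist μ (fun ω => ((ω.1, fun j : {j : Fin n // i < j} => ω.2.1 j.1,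
            fun j : {j : Fin n // j ≠ i} => ω.2.2.1 j.1), ω.2.1 i, ω.2.2.1 i)) (a, p)
        = ∑ p : X1 × W, S * qXW p := Finset.sum_congr rfl fun p _ => hS p.1 p.2
      _ = S := by rw [← Finset.mul_sum, hqXW.2, mul_one]
  rw [hS b c, hCv]


noncomputable def FF {n : ℕ} (μ : K1 × (Fin n → X1) × (Fin n → W) × (Fin n → Yt1) → ℝ)
    (m : ℕ) : ℝ :=
  H μ (fun ω => (ω.1, fun j : {j : Fin n // m ≤ j.1} => ω.2.1 j.1, ω.2.2.1))

noncomputable def GG {n : ℕ} (μ : K1 × (Fin n → X1) × (Fin n → W) × (Fin n → Yt1) → ℝ)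
    (m : ℕ) : ℝ :=
  H μ (fun ω => (ω.2.2.2, ω.1, fun j : {j : Fin n // m ≤ j.1} => ω.2.1 j.1, ω.2.2.1))

variable {n : ℕ} (μ : K1 × (Fin n → X1) × (Fin n → W) × (Fin n → Yt1) → ℝ)

lemma HZ_eq (i : Fin n) :
    H μ (fun ω => (ω.1, fun j : {j : Fin n // i < j} => ω.2.1 j.1, ω.2.2.1))
      = FF μ (i.1 + 1) := by
  refine H_congr μ fun ω ω' => ?_
  simp only [Prod.mk.injEq, funext_iff, Subtype.forall, Fin.lt_def]
  constructor
  · rintro ⟨h1, h2, h3⟩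
    exact ⟨h1, fun j hj => h2 j (by omega), h3⟩
  · rintro ⟨h1, h2, h3⟩
    exact ⟨h1, fun j hj => h2 j (by omega), h3⟩

lemma HXZ_eq (i : Fin n) :
    H μ (fun ω => (ω.2.1 i, (ω.1, fun j : {j : Fin n // i < j} => ω.2.1 j.1, ω.2.2.1)))
      = FF μ i.1 := by
  refine H_congr μ fun ω ω' => ?_
  simp only [Prod.mk.injEq, funext_iff, Subtype.forall, Fin.lt_def]
  constructor
  · rintro ⟨h0, h1, h2, h3⟩
    refine ⟨h1, fun j hj => ?_, h3⟩
    rcases eq_or_lt_of_le hj with he | hl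
    · have : j = i := Fin.ext he.symm
      rw [this]; exact h0
    · exact h2 j hl
  · rintro ⟨h1, h2, h3⟩
    exact ⟨h2 i (le_refl _), h1, fun j hj => h2 j (by omega), h3⟩

lemma HYZ_eq (i : Fin n) :
    H μ (fun ω => (ω.2.2.2, (ω.1, fun j : {j : Fin n // i < j} => ω.2.1 j.1, ω.2.2.1)))
      = GG μ (i.1 + 1) := by
  refine H_congr μ fun ω ω' => ?_
  simp only [Prod.mk.injEq, funext_iff, Subtype.forall, Fin.lt_def]
  constructor
  · rintro ⟨h0, h1, h2, h3⟩
    exact ⟨h0, h1, fun j hj => h2 j (by omega), h3⟩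
  · rintro ⟨h0, h1, h2, h3⟩
    exact ⟨h0, h1, fun j hj => h2 j (by omega), h3⟩

lemma HYXZ_eq (i : Fin n) :
    H μ (fun ω => (ω.2.2.2, ω.2.1 i, (ω.1, fun j : {j : Fin n // i < j} => ω.2.1 j.1, ω.2.2.1)))
      = GG μ i.1 := by
  refine H_congr μ fun ω ω' => ?_
  simp only [Prod.mk.injEq, funext_iff, Subtype.forall, Fin.lt_def]
  constructor
  · rintro ⟨hy, h0, h1, h2, h3⟩
    refine ⟨hy, h1, fun j hj => ?_, h3⟩
    rcases eq_or_lt_of_le hj with he | hl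
    · have : j = i := Fin.ext he.symm
      rw [this]; exact h0
    · exact h2 j hl
  · rintro ⟨hy, h1, h2, h3⟩
    exact ⟨hy, h2 i (le_refl _), h1, fun j hj => h2 j (by omega), h3⟩

lemma FF_zero : FF μ 0 = H μ (fun ω => (ω.2.1, ω.1, ω.2.2.1)) := by
  refine H_congr μ fun ω ω' => ?_
  simp only [Prod.mk.injEq, funext_iff, Subtype.forall, Fin.lt_def]
  constructor
  · rintro ⟨h1, h2, h3⟩
    exact ⟨fun j => h2 j (by omega), h1, h3⟩
  · rintro ⟨h1, h2, h3⟩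
    exact ⟨h2, fun j _ => h1 j, h3⟩

lemma FF_top : FF μ n = H μ (fun ω => (ω.1, ω.2.2.1)) := by
  refine H_congr μ fun ω ω' => ?_
  simp only [Prod.mk.injEq, funext_iff, Subtype.forall, Fin.lt_def]
  constructor
  · rintro ⟨h1, _, h3⟩
    exact ⟨h1, h3⟩
  · rintro ⟨h1, h3⟩
    exact ⟨h1, fun j hj => by omega, h3⟩

lemma GG_zero : GG μ 0 = H μ (fun ω => (ω.2.2.2, ω.2.1, ω.1, ω.2.2.1)) := by
  refine H_congr μ fun ω ω' => ?_
  simp only [Prod.mk.injEq, funext_iff, Subtype.forall, Fin.lt_def]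
  constructor
  · rintro ⟨hy, h1, h2, h3⟩
    exact ⟨hy, fun j => h2 j (by omega), h1, h3⟩
  · rintro ⟨hy, h1, h2, h3⟩
    exact ⟨hy, h2, fun j _ => h1 j, h3⟩

lemma GG_top : GG μ n = H μ (fun ω => (ω.2.2.2, ω.1, ω.2.2.1)) := by
  refine H_congr μ fun ω ω' => ?_
  simp only [Prod.mk.injEq, funext_iff, Subtype.forall, Fin.lt_def]
  constructor
  · rintro ⟨hy, h1, _, h3⟩
    exact ⟨hy, h1, h3⟩
  · rintro ⟨hy, h1, h3⟩
    exact ⟨hy, h1, fun j hj => by omega, h3⟩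


/-- **First converse step in the proof of Theorem 3** (inequality (refnoisy1)).
Let `(X_{1i}, Wᵢ)` be i.i.d., `K1` independent of `(X1ⁿ, Wⁿ)`, and `Ỹ1ⁿ` any random
vector jointly distributed with them.  With
`U_{1i} = (K1, X_{1,i+1}ⁿ, Ỹ1ⁿ, W_{∼i})`:
`∑ᵢ H(Ỹ_{1i}) ≥ H(Ỹ1ⁿ) ≥ I(Ỹ1ⁿ; X1ⁿ | K1, Wⁿ) ≥ ∑ᵢ I(U_{1i}; X_{1i} | Wᵢ)`. -/
theorem converse_step_thm3 {n : ℕ}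
    (pK : K1 → ℝ) (hpK : IsPMF pK)
    (qXW : X1 × W → ℝ) (hqXW : IsPMF qXW)
    (μ : K1 × (Fin n → X1) × (Fin n → W) × (Fin n → Yt1) → ℝ)
    (hμ : IsPMF μ)
    (hmarg : ∀ k x w,
      (∑ yt : Fin n → Yt1, μ (k, x, w, yt)) = pK k * ∏ i, qXW (x i, w i)) :
    (∑ i : Fin n, H μ (fun ω => ω.2.2.2 i)) ≥ H μ (fun ω => ω.2.2.2) ∧
    H μ (fun ω => ω.2.2.2) ≥
      CMI μ (fun ω => ω.2.2.2) (fun ω => ω.2.1) (fun ω => (ω.1, ω.2.2.1)) ∧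
    CMI μ (fun ω => ω.2.2.2) (fun ω => ω.2.1) (fun ω => (ω.1, ω.2.2.1)) ≥
      ∑ i : Fin n, CMI μ
        (fun ω => (ω.1, fun j : {j : Fin n // i < j} => ω.2.1 j.1,
          ω.2.2.2, fun j : {j : Fin n // j ≠ i} => ω.2.2.1 j.1))
        (fun ω => ω.2.1 i)
        (fun ω => ω.2.2.1 i) := by
  classical
  refine ⟨H_le_sum μ hμ (fun ω => ω.2.2.2), ?_, ?_⟩
  · -- H(Y) ≥ I(Y;X|K,W)
    have h1 := H_pair_le μ hμ (fun ω => ω.2.2.2) (fun ω => (ω.1, ω.2.2.1))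
    have h2 := H_snd_le μ hμ (fun ω => ω.2.2.2)
      (fun ω => (ω.2.1, (ω.1, ω.2.2.1)))
    unfold CMI
    linarith
  · -- chain rule + independence
    have hterm : ∀ i : Fin n,
        CMI μ (fun ω => (ω.1, fun j : {j : Fin n // i < j} => ω.2.1 j.1,
            ω.2.2.2, fun j : {j : Fin n // j ≠ i} => ω.2.2.1 j.1))
          (fun ω => ω.2.1 i) (fun ω => ω.2.2.1 i)
        = (FF μ i.1 - FF μ (i.1 + 1)) - (GG μ i.1 - GG μ (i.1 + 1)) := by
      intro i
      -- reorder the first argument: U ≡ (C, Y)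
      have e0 : CMI μ (fun ω => (ω.1, fun j : {j : Fin n // i < j} => ω.2.1 j.1,
            ω.2.2.2, fun j : {j : Fin n // j ≠ i} => ω.2.2.1 j.1))
          (fun ω => ω.2.1 i) (fun ω => ω.2.2.1 i)
        = CMI μ (fun ω => ((ω.1, fun j : {j : Fin n // i < j} => ω.2.1 j.1,
            fun j : {j : Fin n // j ≠ i} => ω.2.2.1 j.1), ω.2.2.2))
          (fun ω => ω.2.1 i) (fun ω => ω.2.2.1 i) := by
        refine CMI_congr μ (fun ω ω' => ?_) (fun _ _ => Iff.rfl) (fun _ _ => Iff.rfl)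
        simp only [Prod.mk.injEq]
        tauto
      rw [e0, CMI_chain μ _ _ _ _]
      have ez : CMI μ (fun ω => (ω.1, fun j : {j : Fin n // i < j} => ω.2.1 j.1,
            fun j : {j : Fin n // j ≠ i} => ω.2.2.1 j.1))
          (fun ω => ω.2.1 i) (fun ω => ω.2.2.1 i) = 0 :=
        CMI_eq_zero_of_factor μ hμ _ _ _ _ qXW (fun a b c => factor_full pK qXW hqXW μ hmarg i a b c)
      rw [ez, zero_add]
      have econd : CMI μ (fun ω => ω.2.2.2) (fun ω => ω.2.1 i)
          (fun ω => ((ω.1, fun j : {j : Fin n // i < j} => ω.2.1 j.1,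
            fun j : {j : Fin n // j ≠ i} => ω.2.2.1 j.1), ω.2.2.1 i))
        = CMI μ (fun ω => ω.2.2.2) (fun ω => ω.2.1 i)
          (fun ω => (ω.1, fun j : {j : Fin n // i < j} => ω.2.1 j.1, ω.2.2.1)) := by
        refine CMI_congr μ (fun _ _ => Iff.rfl) (fun _ _ => Iff.rfl) (fun ω ω' => ?_)
        simp only [Prod.mk.injEq, funext_iff, Subtype.forall]
        constructor
        · rintro ⟨⟨h1, h2, h3⟩, h4⟩
          refine ⟨h1, h2, fun j => ?_⟩
          by_cases hj : j = i
          · rw [hj]; exact h4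
          · exact h3 j hj
        · rintro ⟨h1, h2, h3⟩
          exact ⟨⟨h1, h2, fun j _ => h3 j⟩, h3 i⟩
      rw [econd]
      unfold CMI
      rw [HZ_eq μ i, HXZ_eq μ i, HYZ_eq μ i, HYXZ_eq μ i]
      ring
    rw [Finset.sum_congr rfl fun i _ => hterm i]
    rw [Fin.sum_univ_eq_sum_range (fun m => (FF μ m - FF μ (m + 1)) - (GG μ m - GG μ (m + 1))) n]
    rw [Finset.sum_sub_distrib, Finset.sum_range_sub' (FF μ), Finset.sum_range_sub' (GG μ)]
    have hCMI : CMI μ (fun ω => ω.2.2.2) (fun ω => ω.2.1) (fun ω => (ω.1, ω.2.2.1))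
        = (FF μ 0 - FF μ n) - (GG μ 0 - GG μ n) := by
      unfold CMI
      rw [show H μ (fun ω => (ω.2.2.2, ω.1, ω.2.2.1)) = GG μ n from (GG_top μ).symm,
        show H μ (fun ω => (ω.2.1, ω.1, ω.2.2.1)) = FF μ 0 from (FF_zero μ).symm,
        show H μ (fun ω => (ω.2.2.2, ω.2.1, ω.1, ω.2.2.1)) = GG μ 0 from (GG_zero μ).symm,
        show H μ (fun ω => (ω.1, ω.2.2.1)) = FF μ n from (FF_top μ).symm]
      ring
    rw [hCMI]


end ConverseStepThm3

end SecCoord
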